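/- Let V be a graded vector space and S(V) its graded symmetric algebra with product ∨. Let E* = ⊕_{i=1}^{n} S(V)_i (the components of S(V) in degrees 1 through n, where V is concentrated in degrees 1..n), viewed as a graded vector space, and let T be the free graded-commutative algebra on E* with product ·. Let I ⊆ T be the two-sided ideal generated by all elements ω·η - (ω ∨ η) for homogeneous ω, η ∈ E* with |ω| + |η| ≤ n (where ω ∨ η ∈ S(V)_{|ω|+|η|} ⊆ E*). Then the natural algebra map S(V) → T/I, sending v₁ ∨ ... ∨ v_k (vⱼ ∈ V) to the class of v₁ · ... · v_k, is an isomorphism of graded algebras. -/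

import Mathlib

universe u v

variable (k : Type u) [Field k]

/-- Graded-commutativity (Koszul sign rule). -/
def IsGradedComm {D : Type v} [Ring D] [Algebra k D] (𝒟 : ℕ → Submodule k D) : Prop :=
  ∀ (i j : ℕ), ∀ a ∈ 𝒟 i, ∀ b ∈ 𝒟 j, a * b = ((-1 : ℤ) ^ (i * j)) • (b * a)

/-- `S` (graded by `𝒮`) is the graded symmetric algebra `S(V)` on graded
generating subspaces `V i ⊆ 𝒮 i`: graded-commutative, with the universal
property for maps of the generators into graded-commutative algebras. -/
def IsFreeGradedCommOn {S : Type v} [Ring S] [Algebra k S]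
    (𝒮 : ℕ → Submodule k S) (V : ℕ → Submodule k S) : Prop :=
  (∀ i, V i ≤ 𝒮 i) ∧ IsGradedComm k 𝒮 ∧
  ∀ (D : Type v) (_ : Ring D) (_ : Algebra k D) (𝒟 : ℕ → Submodule k D),
    (∀ (i j : ℕ), ∀ a ∈ 𝒟 i, ∀ b ∈ 𝒟 j, a * b ∈ 𝒟 (i + j)) →
    IsGradedComm k 𝒟 →
    ∀ f : ∀ i, (V i) →ₗ[k] D, (∀ i v, f i v ∈ 𝒟 i) →
    ∃! F : S →ₐ[k] D, ∀ i (v : V i), F (v : S) = f i v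

/-- Lemma 3.2 of the paper, pointwise form: let `S = S(V)` be the
graded symmetric algebra on a graded vector space `V` in degrees `1..n`, let
`E* = ⊕_{i=1}^n S(V)ᵢ`, and let `T` be the free graded-commutative algebra on
`E*` (with generator inclusions `ι i : 𝒮 i → T` for `1 ≤ i ≤ n`).  Let `I` be
the ideal of `T` generated by all `ι(ω)·ι(η) - ι(ω ∨ η)` with
`|ω| + |η| ≤ n` (here realised as the ring quotient `RingQuot rel` by the
corresponding relation).  Then the natural map `S(V) → T/I`, sending
`v₁ ∨ ... ∨ v_k` to the class of `v₁ · ... · v_k`, is an isomorphism of graded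
algebras. -/
theorem symmetric_algebra_eq_free_mod_ideal
    {S T : Type v} [Ring S] [Ring T] [Algebra k S] [Algebra k T]
    (𝒮 : ℕ → Submodule k S) [GradedAlgebra 𝒮]
    (𝒯 : ℕ → Submodule k T) [GradedAlgebra 𝒯]
    (n : ℕ) (V : ℕ → Submodule k S)
    (hV0 : V 0 = ⊥) (hVn : ∀ i, n < i → V i = ⊥)
    (hS : IsFreeGradedCommOn k 𝒮 V)
    -- generator inclusions of E* = ⊕_{i=1}^n 𝒮 i into T
    (ι : ∀ i, (𝒮 i) →ₗ[k] T)
    (hι : ∀ i, 1 ≤ i → i ≤ n → ∀ v, ι i v ∈ 𝒯 i)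
    (hTcomm : IsGradedComm k 𝒯)
    -- T is free graded-commutative on E*
    (hTfree : ∀ (D : Type v) (_ : Ring D) (_ : Algebra k D) (𝒟 : ℕ → Submodule k D),
      (∀ (i j : ℕ), ∀ a ∈ 𝒟 i, ∀ b ∈ 𝒟 j, a * b ∈ 𝒟 (i + j)) →
      IsGradedComm k 𝒟 →
      ∀ f : ∀ i, (𝒮 i) →ₗ[k] D, (∀ i, 1 ≤ i → i ≤ n → ∀ v, f i v ∈ 𝒟 i) →
      ∃! F : T →ₐ[k] D, ∀ i, 1 ≤ i → i ≤ n → ∀ v : 𝒮 i, F (ι i v) = f i v)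
    -- the relation generating the ideal I = ⟨ι(ω)·ι(η) - ι(ω ∨ η)⟩
    (rel : T → T → Prop)
    (hrel : ∀ x y, rel x y ↔ ∃ (i j : ℕ) (_ : 1 ≤ i) (_ : 1 ≤ j) (_ : i + j ≤ n)
      (ω : 𝒮 i) (η : 𝒮 j),
        x = ι i ω * ι j η ∧
        y = ι (i + j) ⟨(ω : S) * (η : S), SetLike.mul_mem_graded ω.2 η.2⟩) :
    ∃ Φ : S ≃ₐ[k] RingQuot rel,
      ∀ i (v : V i),
        Φ (v : S) = RingQuot.mkAlgHom k rel (ι i ⟨(v : S), hS.1 i v.2⟩) := by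
  classical
  obtain ⟨hVS, hScomm, hSuniv⟩ := hS
  set π : T →ₐ[k] RingQuot rel := RingQuot.mkAlgHom k rel with hπdef
  -- vanishing of V outside [1, n]
  have hVtriv : ∀ i, ¬(1 ≤ i ∧ i ≤ n) → ∀ v : V i, (v : S) = 0 := by
    intro i hi v
    have hbot : V i = ⊥ := by
      rcases Nat.eq_zero_or_pos i with rfl | h
      · exact hV0
      · exact hVn i (by omega)
    have : (v : S) ∈ (⊥ : Submodule k S) := by rw [← hbot]; exact v.2
    simpa using this
  -- the grading on the quotient
  set 𝒬 : ℕ → Submodule k (RingQuot rel) := fun i => (𝒯 i).map π.toLinearMap with h𝒬def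
  have h𝒬mem : ∀ i (x : RingQuot rel), x ∈ 𝒬 i ↔ ∃ t ∈ 𝒯 i, π t = x := by
    intro i x
    simp [h𝒬def, Submodule.mem_map]
  have h𝒬mul : ∀ (i j : ℕ), ∀ a ∈ 𝒬 i, ∀ b ∈ 𝒬 j, a * b ∈ 𝒬 (i + j) := by
    intro i j a ha b hb
    obtain ⟨x, hx, rfl⟩ := (h𝒬mem i a).1 ha
    obtain ⟨y, hy, rfl⟩ := (h𝒬mem j b).1 hb
    exact (h𝒬mem _ _).2 ⟨x * y, SetLike.mul_mem_graded hx hy, map_mul π x y⟩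
  have h𝒬comm : IsGradedComm k 𝒬 := by
    intro i j a ha b hb
    obtain ⟨x, hx, rfl⟩ := (h𝒬mem i a).1 ha
    obtain ⟨y, hy, rfl⟩ := (h𝒬mem j b).1 hb
    calc π x * π y = π (x * y) := (map_mul π x y).symm
      _ = π (((-1 : ℤ) ^ (i * j)) • (y * x)) := by rw [hTcomm i j x hx y hy]
      _ = ((-1 : ℤ) ^ (i * j)) • (π y * π x) := by rw [map_zsmul, map_mul]
  -- the map Φ₀ : S → T/I
  obtain ⟨Φ₀, hΦ₀, hΦ₀uniq⟩ := hSuniv (RingQuot rel) inferInstance inferInstance 𝒬 h𝒬mul h𝒬comm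
    (fun i => π.toLinearMap ∘ₗ (ι i) ∘ₗ Submodule.inclusion (hVS i))
    (by
      intro i v
      by_cases hi : 1 ≤ i ∧ i ≤ n
      · exact (h𝒬mem _ _).2 ⟨_, hι i hi.1 hi.2 _, rfl⟩
      · have hv : (v : S) = 0 := hVtriv i hi v
        have : Submodule.inclusion (hVS i) v = 0 := by
          ext; simpa using hv
        simp only [LinearMap.comp_apply, this, map_zero]
        exact zero_mem _)
  -- the map G : T → S
  obtain ⟨G, hG, -⟩ := hTfree S inferInstance inferInstance 𝒮
    (fun i j a ha b hb => SetLike.mul_mem_graded ha hb) hScomm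
    (fun i => (𝒮 i).subtype) (fun i _ _ v => v.2)
  have hGrel : ∀ ⦃x y : T⦄, rel x y → G x = G y := by
    intro x y h
    rw [hrel] at h
    obtain ⟨i, j, hi, hj, hij, ω, η, rfl, rfl⟩ := h
    rw [map_mul, hG i hi (le_trans (Nat.le_add_right i j) hij) ω,
      hG j hj (le_trans (Nat.le_add_left j i) hij) η,
      hG (i + j) (by omega) hij]
    rfl
  set Ψ : RingQuot rel →ₐ[k] S := RingQuot.liftAlgHom k ⟨G, hGrel⟩ with hΨdef
  have hΨ : ∀ t, Ψ (π t) = G t := by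
    intro t
    rw [hΨdef, hπdef]
    exact RingQuot.liftAlgHom_mkAlgHom_apply k G hGrel t
  -- Ψ ∘ Φ₀ = id
  have hid : Ψ.comp Φ₀ = AlgHom.id k S := by
    obtain ⟨F, hF, hFuniq⟩ := hSuniv S inferInstance inferInstance 𝒮
      (fun i j a ha b hb => SetLike.mul_mem_graded ha hb) hScomm
      (fun i => (𝒮 i).subtype ∘ₗ Submodule.inclusion (hVS i)) (fun i v => hVS i v.2)
    have h1 : Ψ.comp Φ₀ = F := by
      apply hFuniq
      intro i v
      simp only [AlgHom.comp_apply, hΦ₀, LinearMap.comp_apply, AlgHom.toLinearMap_apply]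
      rw [hΨ]
      by_cases hi : 1 ≤ i ∧ i ≤ n
      · rw [hG i hi.1 hi.2]
      · have hv : (v : S) = 0 := hVtriv i hi v
        have h0 : Submodule.inclusion (hVS i) v = 0 := by
          ext; simpa using hv
        simp [h0, hv]
    have h2 : AlgHom.id k S = F := by
      apply hFuniq
      intro i v
      rfl
    rw [h1, h2]
  -- Step A : S is generated as an algebra by the V i
  have hAtop : ∀ s : S, s ∈ Algebra.adjoin k (⋃ i, (V i : Set S)) := by
    set A := Algebra.adjoin k (⋃ i, (V i : Set S)) with hAdef
    set 𝒜 : ℕ → Submodule k A := fun i => (𝒮 i).comap A.val.toLinearMap with h𝒜def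
    have h𝒜mem : ∀ i (a : A), a ∈ 𝒜 i ↔ (a : S) ∈ 𝒮 i := by
      intro i a
      simp [h𝒜def, Submodule.mem_comap]
    have h𝒜mul : ∀ (i j : ℕ), ∀ a ∈ 𝒜 i, ∀ b ∈ 𝒜 j, a * b ∈ 𝒜 (i + j) := by
      intro i j a ha b hb
      rw [h𝒜mem] at ha hb ⊢
      exact SetLike.mul_mem_graded ha hb
    have h𝒜comm : IsGradedComm k 𝒜 := by
      intro i j a ha b hb
      rw [h𝒜mem] at ha hb
      apply Subtype.ext
      rw [MulMemClass.coe_mul, AddSubgroupClass.coe_zsmul, MulMemClass.coe_mul]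
      exact hScomm i j _ ha _ hb
    obtain ⟨F, hF, -⟩ := hSuniv A inferInstance inferInstance 𝒜 h𝒜mul h𝒜comm
      (fun i =>
        { toFun := fun v => ⟨(v : S), Algebra.subset_adjoin (Set.mem_iUnion.2 ⟨i, v.2⟩)⟩
          map_add' := fun x y => Subtype.ext rfl
          map_smul' := fun c x => Subtype.ext rfl })
      (fun i v => (h𝒜mem i _).2 (hVS i v.2))
    obtain ⟨F₀, hF₀, hF₀uniq⟩ := hSuniv S inferInstance inferInstance 𝒮
      (fun i j a ha b hb => SetLike.mul_mem_graded ha hb) hScomm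
      (fun i => (𝒮 i).subtype ∘ₗ Submodule.inclusion (hVS i)) (fun i v => hVS i v.2)
    have h1 : A.val.comp F = F₀ := by
      apply hF₀uniq
      intro i v
      simp only [AlgHom.comp_apply, hF]
      rfl
    have h2 : AlgHom.id k S = F₀ := by
      apply hF₀uniq
      intro i v
      rfl
    intro s
    have : A.val (F s) = s := by
      rw [show A.val (F s) = (A.val.comp F) s from rfl, h1, ← h2]
      rfl
    rw [← this]
    exact (F s).2
  -- the homogeneous pieces on which Φ₀ agrees with π ∘ ι
  set M : ℕ → Submodule k S := fun i =>
    if i = 0 then Submodule.span k {(1 : S)}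
    else if i ≤ n then
      Submodule.map (𝒮 i).subtype
        (LinearMap.ker (Φ₀.toLinearMap ∘ₗ (𝒮 i).subtype - π.toLinearMap ∘ₗ ι i))
    else 𝒮 i with hMdef
  have hMmem : ∀ i, 1 ≤ i → i ≤ n →
      ∀ s : S, (s ∈ M i ↔ ∃ hs : s ∈ 𝒮 i, Φ₀ s = π (ι i ⟨s, hs⟩)) := by
    intro i h1 h2 s
    simp only [hMdef]
    simp only [if_neg (by omega : ¬ i = 0), if_pos h2, Submodule.mem_map,
      LinearMap.mem_ker, LinearMap.sub_apply, LinearMap.comp_apply, sub_eq_zero,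
      Submodule.coe_subtype, AlgHom.toLinearMap_apply]
    constructor
    · rintro ⟨t, ht, rfl⟩
      exact ⟨t.2, ht⟩
    · rintro ⟨hs, h⟩
      exact ⟨⟨s, hs⟩, h, rfl⟩
  have hMle : ∀ i, M i ≤ 𝒮 i := by
    intro i
    simp only [hMdef]
    by_cases h0 : i = 0
    · subst h0
      simp only [if_true]
      rw [Submodule.span_le, Set.singleton_subset_iff]
      exact SetLike.one_mem_graded _
    · simp only [if_neg h0]
      by_cases h2 : i ≤ n
      · simp only [if_pos h2]
        rintro s ⟨t, -, rfl⟩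
        exact t.2
      · simp only [if_neg h2]
        exact le_rfl
  have hMone : (1 : S) ∈ M 0 := by
    simp only [hMdef, if_true]
    exact Submodule.mem_span_singleton_self 1
  have hMmul : ∀ p q : ℕ, ∀ a ∈ M p, ∀ b ∈ M q, a * b ∈ M (p + q) := by
    intro p q a ha b hb
    rcases Nat.eq_zero_or_pos p with rfl | hp
    · simp only [hMdef, if_pos rfl] at ha
      obtain ⟨c, rfl⟩ := Submodule.mem_span_singleton.1 ha
      rw [smul_mul_assoc, one_mul, zero_add]
      exact Submodule.smul_mem _ c hb
    rcases Nat.eq_zero_or_pos q with rfl | hq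
    · simp only [hMdef, if_pos rfl] at hb
      obtain ⟨c, rfl⟩ := Submodule.mem_span_singleton.1 hb
      rw [mul_smul_comm, mul_one, add_zero]
      exact Submodule.smul_mem _ c ha
    by_cases hpq : p + q ≤ n
    · obtain ⟨hsa, hea⟩ := (hMmem p hp (by omega) a).1 ha
      obtain ⟨hsb, heb⟩ := (hMmem q hq (by omega) b).1 hb
      rw [hMmem (p + q) (by omega) hpq]
      refine ⟨SetLike.mul_mem_graded hsa hsb, ?_⟩
      rw [map_mul, hea, heb, ← map_mul]
      exact RingQuot.mkAlgHom_rel k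
        ((hrel _ _).2 ⟨p, q, hp, hq, hpq, ⟨a, hsa⟩, ⟨b, hsb⟩, rfl, rfl⟩)
    · have h1 : a ∈ 𝒮 p := hMle p ha
      have h2 : b ∈ 𝒮 q := hMle q hb
      simp only [hMdef]
      simp only [if_neg (by omega : ¬ p + q = 0), if_neg (by omega : ¬ p + q ≤ n)]
      exact SetLike.mul_mem_graded h1 h2
  -- every element of S lies in the span of the M i
  have hsup : ∀ s : S, s ∈ ⨆ i, M i := by
    have inner : ∀ i, ∀ x ∈ M i, ∀ y ∈ (⨆ j, M j), x * y ∈ ⨆ j, M j := by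
      intro i x hxi y hy
      refine Submodule.iSup_induction M (motive := fun y => x * y ∈ ⨆ j, M j) hy
        (fun j y hyj => Submodule.mem_iSup_of_mem (i + j) (hMmul i j x hxi y hyj))
        (by simp) (fun y z hy hz => by simpa [mul_add] using add_mem hy hz)
    have hsupmul : ∀ x y : S, x ∈ (⨆ i, M i) → y ∈ (⨆ i, M i) → x * y ∈ ⨆ i, M i := by
      intro x y hx hy
      refine Submodule.iSup_induction M (motive := fun x => x * y ∈ ⨆ j, M j) hx
        (fun i x hxi => inner i x hxi y hy)
        (by simp) (fun a b ha hb => by simpa [add_mul] using add_mem ha hb)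
    have hone : (1 : S) ∈ ⨆ i, M i := Submodule.mem_iSup_of_mem 0 hMone
    have hadj : Algebra.adjoin k (⋃ i, (V i : Set S)) ≤
        Submodule.toSubalgebra (⨆ i, M i) hone hsupmul := by
      apply Algebra.adjoin_le
      intro s hs
      obtain ⟨i, hsi⟩ := Set.mem_iUnion.1 hs
      show s ∈ ⨆ j, M j
      by_cases hi : 1 ≤ i ∧ i ≤ n
      · refine Submodule.mem_iSup_of_mem i ?_
        rw [hMmem i hi.1 hi.2]
        exact ⟨hVS i hsi, hΦ₀ i ⟨s, hsi⟩⟩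
      · have : s = 0 := hVtriv i hi ⟨s, hsi⟩
        rw [this]
        exact zero_mem _
    intro s
    exact hadj (hAtop s)
  -- the key identity : Φ₀ agrees with π ∘ ι on each 𝒮 i, 1 ≤ i ≤ n
  have key : ∀ i, 1 ≤ i → i ≤ n → ∀ (s : S) (hs : s ∈ 𝒮 i), Φ₀ s = π (ι i ⟨s, hs⟩) := by
    intro i h1 h2 s hs
    have hdec : ((DirectSum.decompose 𝒮 s i : 𝒮 i) : S) ∈ M i := by
      refine Submodule.iSup_induction M
        (motive := fun x => ((DirectSum.decompose 𝒮 x i : 𝒮 i) : S) ∈ M i) (hsup s) ?_ (by simp) ?_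
      · intro j x hxj
        by_cases hij : j = i
        · subst hij
          rw [DirectSum.decompose_of_mem_same 𝒮 (hMle j hxj)]
          exact hxj
        · rw [DirectSum.decompose_of_mem_ne 𝒮 (hMle j hxj) hij]
          exact zero_mem _
      · intro a b ha hb
        rw [DirectSum.decompose_add, DirectSum.add_apply, Submodule.coe_add]
        exact add_mem ha hb
    rw [DirectSum.decompose_of_mem_same 𝒮 hs] at hdec
    obtain ⟨hs', heq⟩ := (hMmem i h1 h2 s).1 hdec
    exact heq
  -- Φ₀ ∘ Ψ = id
  have hid2 : Φ₀.comp Ψ = AlgHom.id k (RingQuot rel) := by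
    obtain ⟨F, hF, hFuniq⟩ := hTfree (RingQuot rel) inferInstance inferInstance 𝒬 h𝒬mul h𝒬comm
      (fun i => π.toLinearMap ∘ₗ ι i)
      (fun i h1 h2 v => (h𝒬mem _ _).2 ⟨ι i v, hι i h1 h2 v, rfl⟩)
    have h1 : (Φ₀.comp Ψ).comp π = F := by
      apply hFuniq
      intro i h1 h2 v
      simp only [AlgHom.comp_apply, LinearMap.comp_apply, AlgHom.toLinearMap_apply]
      rw [hΨ, hG i h1 h2]
      exact key i h1 h2 (v : S) v.2
    have h2 : π = F := by
      apply hFuniq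
      intro i h1 h2 v
      rfl
    apply AlgHom.ext
    intro q
    obtain ⟨t, rfl⟩ := RingQuot.mkAlgHom_surjective k rel q
    have := congrArg (fun F' : T →ₐ[k] RingQuot rel => F' t) (h1.trans h2.symm)
    simpa using this
  refine ⟨AlgEquiv.ofAlgHom Φ₀ Ψ hid2 hid, ?_⟩
  intro i v
  exact hΦ₀ i v
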